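/- Let a > 0. The function m ↦ α(a,m) is strictly decreasing on (1, ∞), where α(a,m) ∈ (Θ₀,1) is the unique value of α such that inf_{ξ∈ℝ} μ₁(a,m,α;ξ) = 0. -/

import Mathlib

open MeasureTheory Set Filter Topology

noncomputable section

/-- `B¹(ℝ₊)`-type regularity on the half line (smooth core):
`u`, `u'` and `t·u` are square integrable on `(0,∞)`. -/
def MemB1p (u : ℝ → ℝ) : Prop :=
  Differentiable ℝ u ∧
  IntegrableOn (fun t => (u t)^2) (Ioi 0) ∧
  IntegrableOn (fun t => (deriv u t)^2) (Ioi 0) ∧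
  IntegrableOn (fun t => t^2 * (u t)^2) (Ioi 0)

/-- The Robin quadratic form `q[γ,ξ]` of `-d²/dt² + (t-ξ)²` on `ℝ₊`. -/
def qRobin (γ ξ : ℝ) (u : ℝ → ℝ) : ℝ :=
  (∫ t in Ioi (0:ℝ), ((deriv u t)^2 + (t - ξ)^2 * (u t)^2)) + γ * (u 0)^2

/-- squared `L²(ℝ₊)` norm. -/
def np (u : ℝ → ℝ) : ℝ := ∫ t in Ioi (0:ℝ), (u t)^2

/-- Lowest Robin eigenvalue `λ₁(γ,ξ)`, defined variationally. -/
def lambda1 (γ ξ : ℝ) : ℝ :=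
  sInf {r : ℝ | ∃ u : ℝ → ℝ, MemB1p u ∧ np u ≠ 0 ∧ r = qRobin γ ξ u / np u}

/-- Lowest Neumann eigenvalue `λ₁^N(ξ)` (Robin with `γ = 0`). -/
def lambda1N (ξ : ℝ) : ℝ := lambda1 0 ξ

/-- Lowest Dirichlet eigenvalue `λ₁^D(ξ)`, defined variationally. -/
def lambda1D (ξ : ℝ) : ℝ :=
  sInf {r : ℝ | ∃ u : ℝ → ℝ, MemB1p u ∧ u 0 = 0 ∧ np u ≠ 0 ∧ r = qRobin 0 ξ u / np u}

/-- The de Gennes constant `Θ₀ = inf_ξ λ₁^N(ξ)`. -/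
def Theta0 : ℝ := sInf (Set.range lambda1N)

/-- `B¹(ℝ)`-type regularity on the whole line (smooth core). -/
def MemB1 (u : ℝ → ℝ) : Prop :=
  Differentiable ℝ u ∧
  Integrable (fun t => (u t)^2) ∧
  Integrable (fun t => (deriv u t)^2) ∧
  Integrable (fun t => t^2 * (u t)^2)

/-- The interface quadratic form `Q[a,m,α;ξ]` on `B¹(ℝ)`. -/
def QI (a m α ξ : ℝ) (u : ℝ → ℝ) : ℝ :=
  (∫ t in Ioi (0:ℝ), ((deriv u t)^2 + (t - ξ)^2 * (u t)^2 - α * (u t)^2)) +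
  ∫ t in Iio (0:ℝ), ((1/m) * ((deriv u t)^2 + (t - ξ)^2 * (u t)^2) + a * α * (u t)^2)

/-- squared `L²(ℝ)` norm. -/
def nR (u : ℝ → ℝ) : ℝ := ∫ t, (u t)^2

/-- Ground state energy `μ₁(a,m,α;ξ)` of the interface operator, defined variationally. -/
def mu1 (a m α ξ : ℝ) : ℝ :=
  sInf {r : ℝ | ∃ u : ℝ → ℝ, MemB1 u ∧ nR u ≠ 0 ∧ r = QI a m α ξ u / nR u}

section AuxProof
/-- If `w` is integrable on `(0,∞)` and tends to `L` at `+∞`, then `L = 0`. -/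
lemma limit_zero_atTop {w : ℝ → ℝ} (hi : IntegrableOn w (Ioi 0))
    {L : ℝ} (hL : Tendsto w atTop (𝓝 L)) : L = 0 := by
  by_contra hL0
  have habs : Tendsto (fun x => |w x|) atTop (𝓝 |L|) := hL.abs
  have hpos : 0 < |L| := abs_pos.mpr hL0
  have hev : ∀ᶠ x in atTop, |L| / 2 < |w x| :=
    habs.eventually (eventually_gt_nhds (half_lt_self hpos))
  obtain ⟨M, hM⟩ := hev.exists_forall_of_atTop
  set M' : ℝ := max M 0 with hM'
  have hsub : Ioi M' ⊆ Ioi (0:ℝ) := Ioi_subset_Ioi (le_max_right _ _)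
  have hi' : IntegrableOn w (Ioi M') := hi.mono_set hsub
  have hconst : IntegrableOn (fun _ : ℝ => |L| / 2) (Ioi M') := by
    refine Integrable.mono' hi'.abs aestronglyMeasurable_const ?_
    refine (ae_restrict_iff' measurableSet_Ioi).mpr (ae_of_all _ ?_)
    intro x hx
    have : |L| / 2 < |w x| := hM x (le_trans (le_max_left _ _) (le_of_lt hx))
    simpa [abs_of_nonneg (le_of_lt (half_pos hpos))] using this.le
  rcases (integrableOn_const_iff enorm_ne_top).mp hconst with h | h
  · exact (ne_of_gt (half_pos hpos)) (enorm_eq_zero.mp h)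
  · simp [Real.volume_Ioi] at h

/-- If `w` is integrable on `(-∞,0)` and tends to `L` at `-∞`, then `L = 0`. -/
lemma limit_zero_atBot {w : ℝ → ℝ} (hi : IntegrableOn w (Iio 0))
    {L : ℝ} (hL : Tendsto w atBot (𝓝 L)) : L = 0 := by
  by_contra hL0
  have habs : Tendsto (fun x => |w x|) atBot (𝓝 |L|) := hL.abs
  have hpos : 0 < |L| := abs_pos.mpr hL0
  have hev : ∀ᶠ x in atBot, |L| / 2 < |w x| :=
    habs.eventually (eventually_gt_nhds (half_lt_self hpos))
  obtain ⟨M, hM⟩ := hev.exists_forall_of_atBot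
  set M' : ℝ := min M 0 with hM'
  have hsub : Iio M' ⊆ Iio (0:ℝ) := Iio_subset_Iio (min_le_right _ _)
  have hi' : IntegrableOn w (Iio M') := hi.mono_set hsub
  have hconst : IntegrableOn (fun _ : ℝ => |L| / 2) (Iio M') := by
    refine Integrable.mono' hi'.abs aestronglyMeasurable_const ?_
    refine (ae_restrict_iff' measurableSet_Iio).mpr (ae_of_all _ ?_)
    intro x hx
    have : |L| / 2 < |w x| := hM x (le_of_lt (lt_of_lt_of_le hx (min_le_left _ _)))
    simpa [abs_of_nonneg (le_of_lt (half_pos hpos))] using this.le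
  rcases (integrableOn_const_iff enorm_ne_top).mp hconst with h | h
  · exact (ne_of_gt (half_pos hpos)) (enorm_eq_zero.mp h)
  · simp [Real.volume_Iio] at h

lemma integral_deriv_Ioi {w : ℝ → ℝ} (hw : Differentiable ℝ w)
    (hw' : IntegrableOn (deriv w) (Ioi 0)) (hwi : IntegrableOn w (Ioi 0)) :
    ∫ t in Ioi (0:ℝ), deriv w t = - w 0 := by
  have h1 : Tendsto (fun b : ℝ => ∫ t in (0:ℝ)..b, deriv w t) atTop
      (𝓝 (∫ t in Ioi (0:ℝ), deriv w t)) :=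
    intervalIntegral_tendsto_integral_Ioi 0 hw' tendsto_id
  have h2 : ∀ᶠ b : ℝ in atTop, w 0 + ∫ t in (0:ℝ)..b, deriv w t = w b := by
    filter_upwards [eventually_ge_atTop (0:ℝ)] with b hb
    have hii : IntervalIntegrable (deriv w) volume 0 b := by
      rw [intervalIntegrable_iff]
      exact hw'.mono_set (by rw [uIoc_of_le hb]; exact fun x hx => hx.1)
    have := intervalIntegral.integral_deriv_eq_sub
      (fun x _ => (hw x)) hii
    rw [this]; ring
  have key : Tendsto w atTop (𝓝 (w 0 + ∫ t in Ioi (0:ℝ), deriv w t)) :=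
    Tendsto.congr' h2 (tendsto_const_nhds.add h1)
  have := limit_zero_atTop hwi key
  linarith

lemma integral_deriv_Iio {w : ℝ → ℝ} (hw : Differentiable ℝ w)
    (hw' : IntegrableOn (deriv w) (Iio 0)) (hwi : IntegrableOn w (Iio 0)) :
    ∫ t in Iio (0:ℝ), deriv w t = w 0 := by
  have hres : volume.restrict (Iio (0:ℝ)) = volume.restrict (Iic 0) :=
    Measure.restrict_congr_set Iio_ae_eq_Iic
  have hw'' : IntegrableOn (deriv w) (Iic 0) := by
    unfold IntegrableOn; rw [← hres]; exact hw'
  have h1 : Tendsto (fun a : ℝ => ∫ t in a..(0:ℝ), deriv w t) atBot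
      (𝓝 (∫ t in Iic (0:ℝ), deriv w t)) :=
    intervalIntegral_tendsto_integral_Iic 0 hw'' tendsto_id
  have h2 : ∀ᶠ a : ℝ in atBot, w 0 - ∫ t in a..(0:ℝ), deriv w t = w a := by
    filter_upwards [eventually_le_atBot (0:ℝ)] with a hb
    have hii : IntervalIntegrable (deriv w) volume a 0 := by
      rw [intervalIntegrable_iff]
      refine hw''.mono_set ?_
      rw [uIoc_of_le hb]; exact fun x hx => hx.2
    have := intervalIntegral.integral_deriv_eq_sub (fun x _ => (hw x)) hii
    rw [this]; ring
  have hwiIic : IntegrableOn w (Iic 0) := by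
    unfold IntegrableOn; rw [← hres]; exact hwi
  have key : Tendsto w atBot (𝓝 (w 0 - ∫ t in Iic (0:ℝ), deriv w t)) :=
    Tendsto.congr' h2 (tendsto_const_nhds.sub h1)
  have h0 := limit_zero_atBot hwi key
  have : ∫ t in Iic (0:ℝ), deriv w t = w 0 := by linarith
  rw [← this]
  exact (integral_Iic_eq_integral_Iio).symm

namespace MemB1

variable {u : ℝ → ℝ} {ξ : ℝ}

lemma meas_u (hu : MemB1 u) : Measurable u := hu.1.continuous.measurable

lemma meas_du (hu : MemB1 u) : Measurable (deriv u) := measurable_deriv u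

/-- `(t-ξ)² u²` is integrable. -/
lemma int_w2 (hu : MemB1 u) (ξ : ℝ) : Integrable (fun t => (t - ξ)^2 * (u t)^2) := by
  refine Integrable.mono' ((hu.2.2.2.const_mul 2).add (hu.2.1.const_mul (2*ξ^2)))
    (((measurable_id.sub_const ξ).pow_const 2).mul ((hu.meas_u).pow_const 2)).aestronglyMeasurable
    (ae_of_all _ fun t => ?_)
  have h1 : (0:ℝ) ≤ (t - ξ)^2 * (u t)^2 := by positivity
  rw [Real.norm_eq_abs, abs_of_nonneg h1]
  simp only [Pi.add_apply]
  nlinarith [sq_nonneg (t + ξ), sq_nonneg (t - ξ), sq_nonneg (u t)]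

/-- `(t-ξ) u²` is integrable. -/
lemma int_w1 (hu : MemB1 u) (ξ : ℝ) : Integrable (fun t => (t - ξ) * (u t)^2) := by
  refine Integrable.mono' ((hu.int_w2 ξ).add hu.2.1)
    ((measurable_id.sub_const ξ).mul ((hu.meas_u).pow_const 2)).aestronglyMeasurable
    (ae_of_all _ fun t => ?_)
  rw [Real.norm_eq_abs, abs_mul, abs_of_nonneg (sq_nonneg (u t))]
  have h2 : |t - ξ| ≤ (t - ξ)^2 + 1 := by
    nlinarith [sq_abs (t - ξ), abs_nonneg (t - ξ), sq_nonneg (|t - ξ| - 1)]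
  simp only [Pi.add_apply]
  nlinarith [sq_nonneg (u t), abs_nonneg (t - ξ)]

/-- `(t-ξ) u u'` is integrable. -/
lemma int_cross (hu : MemB1 u) (ξ : ℝ) : Integrable (fun t => (t - ξ) * u t * deriv u t) := by
  refine Integrable.mono' (((hu.int_w2 ξ).const_mul (1/2)).add (hu.2.2.1.const_mul (1/2)))
    (((measurable_id.sub_const ξ).mul hu.meas_u).mul hu.meas_du).aestronglyMeasurable
    (ae_of_all _ fun t => ?_)
  rw [Real.norm_eq_abs]
  simp only [Pi.add_apply]
  rw [abs_le']
  constructor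
  · nlinarith [sq_nonneg ((t-ξ) * u t - deriv u t)]
  · nlinarith [sq_nonneg ((t-ξ) * u t + deriv u t)]

/-- `u u'` is integrable. -/
lemma int_uu (hu : MemB1 u) : Integrable (fun t => u t * deriv u t) := by
  refine Integrable.mono' ((hu.2.1.const_mul (1/2)).add (hu.2.2.1.const_mul (1/2)))
    (hu.meas_u.mul hu.meas_du).aestronglyMeasurable
    (ae_of_all _ fun t => ?_)
  rw [Real.norm_eq_abs]
  simp only [Pi.add_apply]
  rw [abs_le']
  constructor
  · nlinarith [sq_nonneg (u t - deriv u t)]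
  · nlinarith [sq_nonneg (u t + deriv u t)]

/-- boundary identity on the negative half line: `∫_{ℝ₋} 2 u u' = u(0)²`. -/
lemma boundary_Iio (hu : MemB1 u) : ∫ t in Iio (0:ℝ), 2 * (u t * deriv u t) = (u 0)^2 := by
  have hderiv : deriv (fun t => (u t)^2) = fun t => 2 * (u t * deriv u t) := by
    funext t
    have h := ((hu.1 t).hasDerivAt.fun_pow 2).deriv
    simpa [mul_assoc] using h
  have hdiff : Differentiable ℝ (fun t => (u t)^2) := fun t => ((hu.1 t).hasDerivAt.pow 2).differentiableAt
  have := integral_deriv_Iio hdiff (by rw [hderiv]; exact ((hu.int_uu).const_mul 2).integrableOn)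
    hu.2.1.integrableOn
  rw [hderiv] at this
  exact this

/-- boundary identity on the positive half line. -/
lemma boundary_Ioi (hu : MemB1 u) (ξ : ℝ) :
    ∫ t in Ioi (0:ℝ), ((u t)^2 + 2 * ((t - ξ) * u t * deriv u t)) = ξ * (u 0)^2 := by
  set w : ℝ → ℝ := fun t => (t - ξ) * (u t)^2 with hw
  have hd : ∀ t, HasDerivAt w ((u t)^2 + 2 * ((t - ξ) * u t * deriv u t)) t := by
    intro t
    have h1 : HasDerivAt (fun s : ℝ => s - ξ) 1 t := (hasDerivAt_id t).sub_const ξ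
    have h2 : HasDerivAt (fun s => (u s)^2) (2 * (u t * deriv u t)) t := by
      have := (hu.1 t).hasDerivAt.fun_pow 2
      simpa [mul_assoc] using this
    have := h1.fun_mul h2
    refine this.congr_deriv ?_
    ring
  have hderiv : deriv w = fun t => (u t)^2 + 2 * ((t - ξ) * u t * deriv u t) :=
    funext fun t => (hd t).deriv
  have hdiff : Differentiable ℝ w := fun t => (hd t).differentiableAt
  have := integral_deriv_Ioi hdiff
    (by rw [hderiv]; exact (hu.2.1.add ((hu.int_cross ξ).const_mul 2)).integrableOn)
    (hu.int_w1 ξ).integrableOn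
  rw [hderiv] at this
  rw [this, hw]; ring


/-- energy integrand is integrable -/
lemma int_energy (hu : MemB1 u) (ξ : ℝ) :
    Integrable (fun t => (deriv u t)^2 + (t - ξ)^2 * (u t)^2) :=
  hu.2.2.1.add (hu.int_w2 ξ)

/-- KEY: `∫_{ℝ₊} e + ∫_{ℝ₋} e ≥ ∫_{ℝ₊} u²` where `e = u'² + (t-ξ)²u²`. -/
lemma key_lower (hu : MemB1 u) (ξ : ℝ) :
    (∫ t in Ioi (0:ℝ), (u t)^2) ≤
    (∫ t in Ioi (0:ℝ), ((deriv u t)^2 + (t - ξ)^2 * (u t)^2)) +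
    ∫ t in Iio (0:ℝ), ((deriv u t)^2 + (t - ξ)^2 * (u t)^2) := by
  set P := ∫ t in Ioi (0:ℝ), (u t)^2 with hP
  set S := ∫ t in Ioi (0:ℝ), ((deriv u t)^2 + (t - ξ)^2 * (u t)^2) with hS
  set T := ∫ t in Iio (0:ℝ), ((deriv u t)^2 + (t - ξ)^2 * (u t)^2) with hT
  have hTnn : 0 ≤ T := setIntegral_nonneg measurableSet_Iio (fun t _ => by positivity)
  -- I = ∫_{ℝ₊} (t-ξ) u u'
  have hI : (∫ t in Ioi (0:ℝ), (t - ξ) * u t * deriv u t) = (ξ * (u 0)^2 - P) / 2 := by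
    have hsplit : ∫ t in Ioi (0:ℝ), ((u t)^2 + 2 * ((t - ξ) * u t * deriv u t))
        = P + 2 * ∫ t in Ioi (0:ℝ), (t - ξ) * u t * deriv u t := by
      rw [integral_add hu.2.1.integrableOn (((hu.int_cross ξ).const_mul 2).integrableOn),
        integral_const_mul]
    have := hu.boundary_Ioi ξ
    rw [hsplit] at this
    linarith
  -- expansion of the square
  have hexp : 0 ≤ S + 2 * ((ξ * (u 0)^2 - P) / 2) := by
    have h0 : 0 ≤ ∫ t in Ioi (0:ℝ), (deriv u t + (t - ξ) * u t)^2 :=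
      setIntegral_nonneg measurableSet_Ioi (fun t _ => sq_nonneg _)
    have heq : ∫ t in Ioi (0:ℝ), (deriv u t + (t - ξ) * u t)^2
        = S + 2 * ∫ t in Ioi (0:ℝ), (t - ξ) * u t * deriv u t := by
      have hcongr : ∀ t : ℝ, (deriv u t + (t - ξ) * u t)^2
          = ((deriv u t)^2 + (t - ξ)^2 * (u t)^2) + 2 * ((t - ξ) * u t * deriv u t) := by
        intro t; ring
      rw [show (fun t => (deriv u t + (t - ξ) * u t)^2)
          = fun t => ((deriv u t)^2 + (t - ξ)^2 * (u t)^2) + 2 * ((t - ξ) * u t * deriv u t)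
          from funext hcongr]
      rw [integral_add (hu.int_energy ξ).integrableOn (((hu.int_cross ξ).const_mul 2).integrableOn),
        integral_const_mul]
    rw [heq, hI] at h0
    exact h0
  -- so S ≥ P - ξ u(0)²
  have hmain : P - ξ * (u 0)^2 ≤ S := by linarith
  rcases le_or_gt ξ 0 with hξ | hξ
  · have : ξ * (u 0)^2 ≤ 0 := mul_nonpos_of_nonpos_of_nonneg hξ (sq_nonneg _)
    linarith
  · -- ξ > 0 : bound ξ u(0)² ≤ T
    have hB : ξ * (u 0)^2 ≤ T := by
      have h1 : (u 0)^2 = ∫ t in Iio (0:ℝ), 2 * (u t * deriv u t) := (hu.boundary_Iio).symm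
      have h2 : (∫ t in Iio (0:ℝ), 2 * (u t * deriv u t)) ≤
          ∫ t in Iio (0:ℝ), (ξ * (u t)^2 + (deriv u t)^2 / ξ) := by
        refine setIntegral_mono_on ((hu.int_uu.const_mul 2).integrableOn)
          (((hu.2.1.const_mul ξ).add (hu.2.2.1.div_const ξ)).integrableOn)
          measurableSet_Iio (fun t _ => ?_)
        have key : (ξ * u t - deriv u t)^2
            = ξ * (ξ * (u t)^2 + (deriv u t)^2 / ξ - 2 * (u t * deriv u t)) := by
          field_simp; ring
        have h0 : ξ * 0 ≤ ξ * (ξ * (u t)^2 + (deriv u t)^2 / ξ - 2 * (u t * deriv u t)) := by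
          rw [mul_zero, ← key]; exact sq_nonneg _
        have := le_of_mul_le_mul_left h0 hξ
        linarith
      have h3 : (∫ t in Iio (0:ℝ), (ξ * (u t)^2 + (deriv u t)^2 / ξ))
          = ξ * (∫ t in Iio (0:ℝ), (u t)^2) + (∫ t in Iio (0:ℝ), (deriv u t)^2) / ξ := by
        rw [integral_add ((hu.2.1.const_mul ξ).integrableOn) ((hu.2.2.1.div_const ξ).integrableOn),
          integral_const_mul, integral_div]
      -- ξ² N ≤ B2
      have h4 : ξ^2 * (∫ t in Iio (0:ℝ), (u t)^2) ≤ ∫ t in Iio (0:ℝ), (t - ξ)^2 * (u t)^2 := by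
        rw [← integral_const_mul]
        refine setIntegral_mono_on ((hu.2.1.const_mul (ξ^2)).integrableOn)
          ((hu.int_w2 ξ).integrableOn) measurableSet_Iio (fun t ht => ?_)
        have ht' : t < 0 := ht
        nlinarith [mul_nonneg (mul_nonneg (neg_nonneg.mpr (le_of_lt ht')) (le_of_lt hξ)) (sq_nonneg (u t)),
          mul_nonneg (sq_nonneg t) (sq_nonneg (u t))]
      have hTsplit : T = (∫ t in Iio (0:ℝ), (deriv u t)^2)
          + ∫ t in Iio (0:ℝ), (t - ξ)^2 * (u t)^2 := by
        rw [hT, integral_add (hu.2.2.1.integrableOn) ((hu.int_w2 ξ).integrableOn)]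
      have hN : 0 ≤ ∫ t in Iio (0:ℝ), (u t)^2 :=
        setIntegral_nonneg measurableSet_Iio (fun t _ => sq_nonneg _)
      have hB1 : 0 ≤ ∫ t in Iio (0:ℝ), (deriv u t)^2 :=
        setIntegral_nonneg measurableSet_Iio (fun t _ => sq_nonneg _)
      -- ξ u0² ≤ ξ² N + B1 ≤ T
      have h5 : ξ * (u 0)^2 ≤ ξ^2 * (∫ t in Iio (0:ℝ), (u t)^2) + ∫ t in Iio (0:ℝ), (deriv u t)^2 := by
        have := h1 ▸ (h2.trans_eq h3)
        -- (u 0)^2 ≤ ξ N + B1/ξ; multiply by ξ > 0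
        have hmul := mul_le_mul_of_nonneg_left this (le_of_lt hξ)
        calc ξ * (u 0)^2 ≤ ξ * (ξ * (∫ t in Iio (0:ℝ), (u t)^2) + (∫ t in Iio (0:ℝ), (deriv u t)^2) / ξ) := hmul
          _ = ξ^2 * (∫ t in Iio (0:ℝ), (u t)^2) + ∫ t in Iio (0:ℝ), (deriv u t)^2 := by
              field_simp
      linarith
    linarith

/-- decomposition of QI -/
lemma QI_eq (hu : MemB1 u) (a m α ξ : ℝ) :
    QI a m α ξ u =
      (∫ t in Ioi (0:ℝ), ((deriv u t)^2 + (t - ξ)^2 * (u t)^2))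
      - α * (∫ t in Ioi (0:ℝ), (u t)^2)
      + (1/m) * (∫ t in Iio (0:ℝ), ((deriv u t)^2 + (t - ξ)^2 * (u t)^2))
      + (a * α) * (∫ t in Iio (0:ℝ), (u t)^2) := by
  unfold QI
  have h1 : ∫ t in Ioi (0:ℝ), ((deriv u t)^2 + (t - ξ)^2 * (u t)^2 - α * (u t)^2)
      = (∫ t in Ioi (0:ℝ), ((deriv u t)^2 + (t - ξ)^2 * (u t)^2))
        - α * ∫ t in Ioi (0:ℝ), (u t)^2 := by
    rw [integral_sub (hu.int_energy ξ).integrableOn ((hu.2.1.const_mul α).integrableOn),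
      integral_const_mul]
  have h2 : ∫ t in Iio (0:ℝ), ((1/m) * ((deriv u t)^2 + (t - ξ)^2 * (u t)^2) + a * α * (u t)^2)
      = (1/m) * (∫ t in Iio (0:ℝ), ((deriv u t)^2 + (t - ξ)^2 * (u t)^2))
        + (a * α) * ∫ t in Iio (0:ℝ), (u t)^2 := by
    rw [integral_add (((hu.int_energy ξ).const_mul (1/m)).integrableOn)
      ((hu.2.1.const_mul (a*α)).integrableOn), integral_const_mul, integral_const_mul]
  rw [h1, h2]; ring

/-- `nR u = N + P`. -/
lemma nR_eq (hu : MemB1 u) :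
    nR u = (∫ t in Iio (0:ℝ), (u t)^2) + ∫ t in Ioi (0:ℝ), (u t)^2 := by
  rw [nR, ← intervalIntegral.integral_Iic_add_Ioi (b := (0:ℝ)) hu.2.1.integrableOn hu.2.1.integrableOn,
    integral_Iic_eq_integral_Iio]


end MemB1
def gaussF : ℝ → ℝ := fun t => Real.exp (-t^2)

lemma gauss_hasDeriv (t : ℝ) : HasDerivAt gaussF (Real.exp (-t^2) * (-(2*t))) t := by
  have h : HasDerivAt (fun s : ℝ => -s^2) (-(2*t)) t := by
    simpa using (hasDerivAt_pow 2 t).fun_neg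
  unfold gaussF
  simpa using h.exp

lemma gauss_deriv : deriv gaussF = fun t => Real.exp (-t^2) * (-(2*t)) :=
  funext fun t => (gauss_hasDeriv t).deriv

lemma gauss_sq (t : ℝ) : (gaussF t)^2 = Real.exp (-(2:ℝ)*t^2) := by
  show (Real.exp (-t^2))^2 = _
  rw [← Real.exp_nat_mul]; congr 1; push_cast; ring

lemma gauss_memB1 : MemB1 gaussF := by
  have hint : Integrable (fun t : ℝ => Real.exp (-(2:ℝ)*t^2)) := integrable_exp_neg_mul_sq (by norm_num)
  have hint1 : Integrable (fun t : ℝ => Real.exp (-(1:ℝ)*t^2)) := integrable_exp_neg_mul_sq (by norm_num)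
  refine ⟨fun t => (gauss_hasDeriv t).differentiableAt, ?_, ?_, ?_⟩
  · refine hint.congr ?_ -- wrong direction? use Integrable.congr with ae eq
    exact ae_of_all _ fun t => (gauss_sq t).symm
  · rw [gauss_deriv]
    refine Integrable.mono' (hint1.const_mul 4)
      (Continuous.aestronglyMeasurable (by continuity)) (ae_of_all _ fun t => ?_)
    have h1 : (Real.exp (-t^2) * (-(2*t)))^2 = 4 * t^2 * Real.exp (-(2:ℝ)*t^2) := by
      rw [mul_pow, ← Real.exp_nat_mul]; norm_num; ring_nf
    rw [Real.norm_eq_abs, abs_of_nonneg (sq_nonneg _), h1]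
    have h2 : t^2 ≤ Real.exp (t^2) := by
      nlinarith [Real.add_one_le_exp (t^2)]
    have h3 : Real.exp (t^2) * Real.exp (-(2:ℝ)*t^2) = Real.exp (-(1:ℝ)*t^2) := by
      rw [← Real.exp_add]; ring_nf
    calc 4 * t^2 * Real.exp (-(2:ℝ)*t^2) ≤ 4 * Real.exp (t^2) * Real.exp (-(2:ℝ)*t^2) := by
          have := Real.exp_pos (-(2:ℝ)*t^2)
          nlinarith
      _ = 4 * Real.exp (-(1:ℝ)*t^2) := by rw [mul_assoc, h3]
  · refine Integrable.mono' hint1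
      (Continuous.aestronglyMeasurable (by unfold gaussF; continuity)) (ae_of_all _ fun t => ?_)
    have h1 : t^2 * (gaussF t)^2 = t^2 * Real.exp (-(2:ℝ)*t^2) := by rw [gauss_sq]
    rw [Real.norm_eq_abs, abs_of_nonneg (by positivity), h1]
    have h2 : t^2 ≤ Real.exp (t^2) := by nlinarith [Real.add_one_le_exp (t^2)]
    have h3 : Real.exp (t^2) * Real.exp (-(2:ℝ)*t^2) = Real.exp (-(1:ℝ)*t^2) := by
      rw [← Real.exp_add]; ring_nf
    calc t^2 * Real.exp (-(2:ℝ)*t^2) ≤ Real.exp (t^2) * Real.exp (-(2:ℝ)*t^2) := by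
          have := Real.exp_pos (-(2:ℝ)*t^2); nlinarith
      _ = Real.exp (-(1:ℝ)*t^2) := h3

lemma gauss_nR_ne : nR gaussF ≠ 0 := by
  have : nR gaussF = ∫ t : ℝ, Real.exp (-(2:ℝ)*t^2) := by
    unfold nR; congr 1; funext t; exact gauss_sq t
  rw [this, integral_gaussian]
  positivity

lemma Theta0_nonneg : 0 ≤ Theta0 := by
  refine Real.sInf_nonneg fun x hx => ?_
  obtain ⟨ξ, rfl⟩ := hx
  refine Real.sInf_nonneg fun r hr => ?_
  obtain ⟨u, hu, hn, rfl⟩ := hr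
  refine div_nonneg ?_ (setIntegral_nonneg measurableSet_Ioi fun t _ => sq_nonneg _)
  have h1 : 0 ≤ ∫ t in Ioi (0:ℝ), ((deriv u t)^2 + (t - ξ)^2 * (u t)^2) :=
    setIntegral_nonneg measurableSet_Ioi fun t _ => by positivity
  simp only [qRobin, zero_mul, add_zero]
  exact h1

section machinery

variable {a m α : ℝ}

lemma MemB1.nR_pos {u : ℝ → ℝ} (hu : MemB1 u) (hn : nR u ≠ 0) : 0 < nR u := by
  have h0 : 0 ≤ nR u := by
    rw [hu.nR_eq]
    have h1 : 0 ≤ ∫ t in Iio (0:ℝ), (u t)^2 :=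
      setIntegral_nonneg measurableSet_Iio fun t _ => sq_nonneg _
    have h2 : 0 ≤ ∫ t in Ioi (0:ℝ), (u t)^2 :=
      setIntegral_nonneg measurableSet_Ioi fun t _ => sq_nonneg _
    linarith
  exact lt_of_le_of_ne h0 (Ne.symm hn)

lemma QI_lb (ha : 0 < a) (hm : 0 < m) (hα : 0 ≤ α) (ξ : ℝ) {u : ℝ → ℝ} (hu : MemB1 u) :
    -α * nR u ≤ QI a m α ξ u := by
  rw [hu.QI_eq a m α ξ, hu.nR_eq]
  have hS : 0 ≤ ∫ t in Ioi (0:ℝ), ((deriv u t)^2 + (t - ξ)^2 * (u t)^2) :=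
    setIntegral_nonneg measurableSet_Ioi fun t _ => by positivity
  have hT : 0 ≤ ∫ t in Iio (0:ℝ), ((deriv u t)^2 + (t - ξ)^2 * (u t)^2) :=
    setIntegral_nonneg measurableSet_Iio fun t _ => by positivity
  have hN : 0 ≤ ∫ t in Iio (0:ℝ), (u t)^2 := setIntegral_nonneg measurableSet_Iio fun t _ => sq_nonneg _
  have h1 : 0 ≤ (1/m) * ∫ t in Iio (0:ℝ), ((deriv u t)^2 + (t - ξ)^2 * (u t)^2) :=
    mul_nonneg (by positivity) hT
  have h2 : 0 ≤ (a * α) * ∫ t in Iio (0:ℝ), (u t)^2 := mul_nonneg (by positivity) hN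
  have h3 : 0 ≤ α * ∫ t in Iio (0:ℝ), (u t)^2 := mul_nonneg hα hN
  linarith only [hS, h1, h2, h3]

lemma setQ_lb (ha : 0 < a) (hm : 0 < m) (hα : 0 ≤ α) (ξ : ℝ) :
    ∀ r ∈ {r : ℝ | ∃ u : ℝ → ℝ, MemB1 u ∧ nR u ≠ 0 ∧ r = QI a m α ξ u / nR u}, -α ≤ r := by
  rintro r ⟨u, hu, hn, rfl⟩
  have hpos := hu.nR_pos hn
  rw [le_div_iff₀ hpos]
  exact QI_lb ha hm hα ξ hu

lemma setQ_nonempty (a m α ξ : ℝ) :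
    {r : ℝ | ∃ u : ℝ → ℝ, MemB1 u ∧ nR u ≠ 0 ∧ r = QI a m α ξ u / nR u}.Nonempty :=
  ⟨QI a m α ξ gaussF / nR gaussF, gaussF, gauss_memB1, gauss_nR_ne, rfl⟩

lemma setQ_bdd (ha : 0 < a) (hm : 0 < m) (hα : 0 ≤ α) (ξ : ℝ) :
    BddBelow {r : ℝ | ∃ u : ℝ → ℝ, MemB1 u ∧ nR u ≠ 0 ∧ r = QI a m α ξ u / nR u} :=
  ⟨-α, setQ_lb ha hm hα ξ⟩

lemma mu1_lb (ha : 0 < a) (hm : 0 < m) (hα : 0 ≤ α) (ξ : ℝ) : -α ≤ mu1 a m α ξ :=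
  le_csInf (setQ_nonempty a m α ξ) (setQ_lb ha hm hα ξ)

lemma range_bdd (ha : 0 < a) (hm : 0 < m) (hα : 0 ≤ α) :
    BddBelow (Set.range (mu1 a m α)) := by
  refine ⟨-α, ?_⟩
  rintro x ⟨ξ, rfl⟩
  exact mu1_lb ha hm hα ξ

lemma QI_nonneg (ha : 0 < a) (hm : 0 < m) (hα : 0 ≤ α)
    (h : sInf (Set.range (mu1 a m α)) = 0) (ξ : ℝ) {u : ℝ → ℝ} (hu : MemB1 u)
    (hn : nR u ≠ 0) : 0 ≤ QI a m α ξ u := by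
  have h1 : 0 ≤ mu1 a m α ξ := h ▸ csInf_le (range_bdd ha hm hα) (mem_range_self ξ)
  have h2 : mu1 a m α ξ ≤ QI a m α ξ u / nR u :=
    csInf_le (setQ_bdd ha hm hα ξ) ⟨u, hu, hn, rfl⟩
  have hpos := hu.nR_pos hn
  have h3 : 0 ≤ QI a m α ξ u / nR u := le_trans h1 h2
  have := mul_nonneg h3 hpos.le
  rwa [div_mul_cancel₀ _ (ne_of_gt hpos)] at this

lemma exists_near (ha : 0 < a) (hm : 0 < m) (hα : 0 ≤ α)
    (h : sInf (Set.range (mu1 a m α)) = 0) {ε : ℝ} (hε : 0 < ε) :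
    ∃ ξ u, MemB1 u ∧ nR u ≠ 0 ∧ QI a m α ξ u < ε * nR u := by
  have h1 : sInf (Set.range (mu1 a m α)) < ε := by rw [h]; exact hε
  obtain ⟨x, ⟨ξ, rfl⟩, hx⟩ :=
    (csInf_lt_iff (range_bdd ha hm hα) ⟨mu1 a m α 0, mem_range_self 0⟩).mp h1
  have h2 : sInf {r : ℝ | ∃ u : ℝ → ℝ, MemB1 u ∧ nR u ≠ 0 ∧ r = QI a m α ξ u / nR u} < ε := hx
  obtain ⟨r, ⟨u, hu, hn, rfl⟩, hr⟩ :=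
    (csInf_lt_iff (setQ_bdd ha hm hα ξ) (setQ_nonempty a m α ξ)).mp h2
  exact ⟨ξ, u, hu, hn, (div_lt_iff₀ (hu.nR_pos hn)).mp hr⟩

end machinery


end AuxProof
set_option maxHeartbeats 1000000 in
/-- `m ↦ α(a,m)` is strictly decreasing on `(1,∞)`: if `1 < m₂ < m₁`
and `α₁, α₂ ∈ (Θ₀,1)` are the corresponding critical values (i.e.
`inf_ξ μ₁(a,mᵢ,αᵢ;ξ) = 0`), then `α₁ < α₂`. -/
theorem alpha_strictAnti (a m₁ m₂ α₁ α₂ : ℝ) (ha : 0 < a)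
    (hm₂ : 1 < m₂) (hm : m₂ < m₁)
    (hα₁ : α₁ ∈ Ioo Theta0 1) (hα₂ : α₂ ∈ Ioo Theta0 1)
    (h₁ : sInf (Set.range (mu1 a m₁ α₁)) = 0)
    (h₂ : sInf (Set.range (mu1 a m₂ α₂)) = 0) :
    α₁ < α₂ := by
  by_contra hcon
  push_neg at hcon  -- α₂ ≤ α₁
  have hα₂0 : 0 < α₂ := lt_of_le_of_lt Theta0_nonneg hα₂.1
  have hα₁0 : 0 < α₁ := lt_of_le_of_lt Theta0_nonneg hα₁.1
  have hα₁1 : α₁ < 1 := hα₁.2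
  have hα₂1 : α₂ < 1 := hα₂.2
  have hm₂0 : 0 < m₂ := lt_trans one_pos hm₂
  have hm₁0 : 0 < m₁ := lt_trans hm₂0 hm
  set δ : ℝ := 1/m₂ - 1/m₁ with hδdef
  have hδ : 0 < δ := by
    have := one_div_lt_one_div_of_lt hm₂0 hm
    simp only [hδdef]; linarith
  set C₁ : ℝ := (1 + 1/α₂)/δ with hC₁def
  have hC₁ : 0 < C₁ := by positivity
  set c₀ : ℝ := (1 - α₂)*a/(2*(a+1)) with hc₀def
  have hc₀ : 0 < c₀ := by
    apply div_pos (mul_pos (by linarith) ha) (by linarith)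
  set ε : ℝ := min (a*α₂/2) (c₀/(2*(1+C₁))) with hεdef
  have hε : 0 < ε := lt_min (by positivity) (by positivity)
  obtain ⟨ξ, u, hu, hn, hQ2⟩ := exists_near ha hm₂0 hα₂0.le h₂ hε
  set S := ∫ t in Ioi (0:ℝ), ((deriv u t)^2 + (t - ξ)^2 * (u t)^2) with hSdef
  set T := ∫ t in Iio (0:ℝ), ((deriv u t)^2 + (t - ξ)^2 * (u t)^2) with hTdef
  set P := ∫ t in Ioi (0:ℝ), (u t)^2 with hPdef
  set N := ∫ t in Iio (0:ℝ), (u t)^2 with hNdef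
  set n := nR u with hndef
  have hSnn : 0 ≤ S := setIntegral_nonneg measurableSet_Ioi fun t _ => by positivity
  have hTnn : 0 ≤ T := setIntegral_nonneg measurableSet_Iio fun t _ => by positivity
  have hPnn : 0 ≤ P := setIntegral_nonneg measurableSet_Ioi fun t _ => sq_nonneg _
  have hNnn : 0 ≤ N := setIntegral_nonneg measurableSet_Iio fun t _ => sq_nonneg _
  have hneq : n = N + P := hu.nR_eq
  have hnpos : 0 < n := hu.nR_pos hn
  have hQ2' : S - α₂*P + (1/m₂)*T + a*α₂*N < ε*n := by
    have := hu.QI_eq a m₂ α₂ ξ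
    rw [this] at hQ2
    linarith [hQ2]
  have hQ1' : 0 ≤ S - α₁*P + (1/m₁)*T + a*α₁*N := by
    have h0 := QI_nonneg ha hm₁0 hα₁0.le h₁ ξ hu hn
    rw [hu.QI_eq a m₁ α₁ ξ] at h0
    linarith [h0]
  have hkey : P ≤ S + T := hu.key_lower ξ
  -- step 1 : mass bound
  have hinv : 0 < 1/m₂ := by positivity
  have hTm : 0 ≤ 1/m₂*T := mul_nonneg hinv.le hTnn
  have h4 : a*α₂*N < ε*n + α₂*P := by linarith only [hQ2', hSnn, hTm]
  -- step 2 : a N - P ≤ ε n / α₂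
  have haN : a*N - P ≤ ε*n/α₂ := by
    rw [le_div_iff₀ hα₂0]
    linarith only [h4]
  have hεnα : 0 ≤ ε*n/α₂ := by positivity
  have hprod : (α₁ - α₂)*(a*N - P) ≤ ε*n/α₂ := by
    rcases le_or_gt (a*N - P) 0 with hc | hc
    · have := mul_nonpos_of_nonneg_of_nonpos (by linarith : 0 ≤ α₁ - α₂) hc
      linarith only [this, hεnα]
    · have h5 : (α₁ - α₂)*(a*N - P) ≤ 1*(a*N - P) :=
        mul_le_mul_of_nonneg_right (by linarith only [hcon, hα₁1, hα₂0]) hc.le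
      linarith only [h5, haN]
  -- step 3 : T small
  have hid : S - α₁*P + (1/m₁)*T + a*α₁*N
      = (S - α₂*P + (1/m₂)*T + a*α₂*N) + (α₁ - α₂)*(a*N - P) - δ*T := by
    rw [hδdef]; ring
  have hδT : δ*T < ε*n + ε*n/α₂ := by
    rw [hid] at hQ1'
    linarith only [hQ1', hQ2', hprod]
  have hδC : δ*C₁ = 1 + 1/α₂ := by
    rw [hC₁def]; field_simp
  have hT2 : T < C₁*ε*n := by
    have h6 : δ*T < δ*(C₁*ε*n) := by
      have : δ*(C₁*ε*n) = (1 + 1/α₂)*(ε*n) := by rw [← hδC]; ring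
      rw [this]
      have heq2 : ε*n + ε*n/α₂ = (1 + 1/α₂)*(ε*n) := by field_simp
      linarith only [hδT, heq2]
    exact lt_of_mul_lt_mul_left h6 hδ.le
  -- step 4 : P bound from key inequality
  have haαN : 0 ≤ a*α₂*N := mul_nonneg (mul_nonneg ha.le hα₂0.le) hNnn
  have hP1 : (1 - α₂)*P < ε*n + T := by
    linarith only [hQ2', hkey, hTm, haαN]
  -- step 5 : P not too small
  have hεa : ε ≤ a*α₂/2 := min_le_left _ _
  have h6 : a*α₂*N < (a*α₂/2)*n + α₂*P := by
    have : ε*n ≤ (a*α₂/2)*n := mul_le_mul_of_nonneg_right hεa hnpos.le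
    linarith only [h4, this]
  have h7 : a*N < (a/2)*n + P := by
    have h6' : (a*N)*α₂ < ((a/2)*n + P)*α₂ := by linarith only [h6]
    exact lt_of_mul_lt_mul_right h6' hα₂0.le
  have h8 : (a/2)*n < (1+a)*P := by
    have hN' : N = n - P := by linarith only [hneq]
    have : a*N = a*n - a*P := by rw [hN']; ring
    linarith only [h7, this]
  -- final contradiction
  have hε2 : ε ≤ c₀/(2*(1+C₁)) := min_le_right _ _
  have hfin1 : (1 - α₂)*P < ε*(1+C₁)*n := by
    have : ε*n + C₁*ε*n = ε*(1+C₁)*n := by ring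
    linarith only [hP1, hT2, this]
  have hfin2 : ε*(1+C₁)*n ≤ (c₀/2)*n := by
    have hden : (0:ℝ) < 2*(1+C₁) := by positivity
    have h9 : ε*(2*(1+C₁)) ≤ c₀ := (le_div_iff₀ hden).mp hε2
    have h10 : ε*(1+C₁) ≤ c₀/2 := by linarith only [h9]
    exact mul_le_mul_of_nonneg_right h10 hnpos.le
  have hfin3 : c₀*n < (1 - α₂)*P := by
    have h8' : a*n < 2*((1+a)*P) := by linarith
    have h9' : (1-α₂)*(a*n) < (1-α₂)*(2*((1+a)*P)) :=
      mul_lt_mul_of_pos_left h8' (by linarith)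
    have hden : (0:ℝ) < 2*(a+1) := by linarith
    rw [hc₀def, div_mul_eq_mul_div, div_lt_iff₀ hden]
    linarith only [h9']
  linarith only [mul_pos hc₀ hnpos, hfin1, hfin2, hfin3]
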